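/- arXiv:1804.07642 — 5 statements merged into one kernel-verified Lean document; each statement's English description precedes it below -/
import Mathlib

section
/- Let a ∈ (0,1], let K ≥ 1 be an integer, and define g : (K−1, ∞) → ℝ by g(r) = ∑_{j=0}^{K−1} 1/min(1, (r−j)·a). Let M ≥ 1, let p₁ > p₂ > ⋯ > p_M > 0 be strictly decreasing positive reals, and let S ≥ M·K. Then the minimum of G(r) = ∑_{m=1}^M p_m · g(r_m) over the compact set { r ∈ ℝ^M : K ≤ r_m ≤ a⁻¹ + K for all m, ∑_{m=1}^M r_m ≤ S } is attained, and it is attained at some r̂ that is non-increasing: i ≤ j implies r̂_i ≥ r̂_j. -/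
section aux

variable (a : ℝ) (K : ℕ)

noncomputable def gfun (r : ℝ) : ℝ := ∑ j ∈ Finset.range K, 1 / min 1 ((r - j) * a)

lemma gfun_anti (ha0 : 0 < a) {r s : ℝ} (hr : (K : ℝ) ≤ r) (hrs : r ≤ s) :
    gfun a K s ≤ gfun a K r := by
  apply Finset.sum_le_sum
  intro j hj
  have hjK : (j : ℝ) + 1 ≤ (K : ℝ) := by
    exact_mod_cast Nat.succ_le_of_lt (Finset.mem_range.mp hj)
  have h1 : (0 : ℝ) < (r - j) * a := by nlinarith
  have h2 : (r - j) * a ≤ (s - j) * a := by nlinarith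
  have hmin1 : (0 : ℝ) < min 1 ((r - j) * a) := lt_min one_pos h1
  have hminle : min 1 ((r - j) * a) ≤ min 1 ((s - j) * a) :=
    min_le_min le_rfl h2
  exact one_div_le_one_div_of_le hmin1 hminle

end aux

/-- Lemma 3 (exact form): the minimum of the MDS-coded delay objective over the
compact feasible set is attained, at some non-increasing allocation. -/
theorem mds_optimal_allocation_exists_nonincreasing
    (a : ℝ) (ha0 : 0 < a) (ha1 : a ≤ 1) (K : ℕ) (hK : 1 ≤ K)
    (M : ℕ) (hM : 1 ≤ M) (p : Fin M → ℝ) (hp : ∀ m, 0 < p m) (hdec : StrictAnti p)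
    (S : ℝ) (hS : (M : ℝ) * K ≤ S) :
    ∃ rhat : Fin M → ℝ,
      (∀ m, (K : ℝ) ≤ rhat m ∧ rhat m ≤ a⁻¹ + K) ∧ (∑ m, rhat m ≤ S) ∧
      (∀ r : Fin M → ℝ, (∀ m, (K : ℝ) ≤ r m ∧ r m ≤ a⁻¹ + K) → ∑ m, r m ≤ S →
        ∑ m, p m * (∑ j ∈ Finset.range K, 1 / min 1 ((rhat m - j) * a)) ≤
          ∑ m, p m * (∑ j ∈ Finset.range K, 1 / min 1 ((r m - j) * a))) ∧
      (∀ i j : Fin M, i ≤ j → rhat j ≤ rhat i) := by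
  classical
  -- the feasible set
  set C : Set (Fin M → ℝ) :=
    {r | (∀ m, (K : ℝ) ≤ r m ∧ r m ≤ a⁻¹ + K) ∧ ∑ m, r m ≤ S} with hC
  -- C is nonempty
  have hmem : (fun _ : Fin M => (K : ℝ)) ∈ C := by
    constructor
    · intro m
      have := inv_pos.mpr ha0; exact ⟨le_rfl, by linarith⟩
    · simpa [Finset.sum_const, mul_comm] using hS
  -- C is compact
  have hsub : C ⊆ Set.pi Set.univ (fun _ : Fin M => Set.Icc (K : ℝ) (a⁻¹ + K)) := by
    intro r hr m _
    exact ⟨(hr.1 m).1, (hr.1 m).2⟩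
  have hCcomp : IsCompact C := by
    refine (isCompact_univ_pi fun _ => isCompact_Icc).of_isClosed_subset ?_ hsub
    have h1 : IsClosed {r : Fin M → ℝ | ∀ m, (K : ℝ) ≤ r m ∧ r m ≤ a⁻¹ + K} := by
      have : {r : Fin M → ℝ | ∀ m, (K : ℝ) ≤ r m ∧ r m ≤ a⁻¹ + K} =
          Set.pi Set.univ (fun _ : Fin M => Set.Icc (K : ℝ) (a⁻¹ + K)) := by
        ext r
        simp only [Set.mem_setOf_eq, Set.mem_univ_pi, Set.mem_Icc]
      rw [this]
      exact isClosed_set_pi fun _ _ => isClosed_Icc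
    have h2 : IsClosed {r : Fin M → ℝ | ∑ m, r m ≤ S} :=
      isClosed_le (by continuity) continuous_const
    exact h1.inter h2
  -- the objective is continuous on C
  have hcont : ContinuousOn (fun r : Fin M → ℝ => ∑ m, p m * gfun a K (r m)) C := by
    apply continuousOn_finset_sum
    intro m _
    apply ContinuousOn.mul continuousOn_const
    unfold gfun
    apply continuousOn_finset_sum
    intro j hj
    apply ContinuousOn.div continuousOn_const
    · exact (continuousOn_const.inf (((continuous_apply m).continuousOn.sub
        continuousOn_const).mul continuousOn_const))
    · intro r hr
      have hjK : (j : ℝ) + 1 ≤ (K : ℝ) := by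
        exact_mod_cast Nat.succ_le_of_lt (Finset.mem_range.mp hj)
      have hrm := (hr.1 m).1
      have h1 : (0 : ℝ) < (r m - j) * a := by nlinarith
      exact ne_of_gt (lt_min one_pos h1)
  obtain ⟨r0, hr0C, hr0min⟩ := hCcomp.exists_isMinOn ⟨_, hmem⟩ hcont
  -- sort r0 to be non-increasing
  set σ : Equiv.Perm (Fin M) := Tuple.sort (fun i => -r0 i) with hσ
  have hmono : Monotone ((fun i => -r0 i) ∘ σ) := Tuple.monotone_sort _
  set rhat : Fin M → ℝ := r0 ∘ σ with hrhat
  have hanti : ∀ i j : Fin M, i ≤ j → rhat j ≤ rhat i := by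
    intro i j hij
    have := hmono hij
    simp only [Function.comp_apply] at this
    simpa [rhat] using neg_le_neg_iff.mp this
  have hrhatC : rhat ∈ C := by
    constructor
    · intro m; exact hr0C.1 (σ m)
    · calc ∑ m, rhat m = ∑ m, r0 m := Equiv.sum_comp σ r0
        _ ≤ S := hr0C.2
  -- rearrangement: value at rhat ≤ value at r0
  have hre : ∑ m, p m * gfun a K (rhat m) ≤ ∑ m, p m * gfun a K (r0 m) := by
    have hantiv : Antivary p (fun m => gfun a K (rhat m)) := by
      intro i j hij
      by_contra h
      push_neg at h
      have hji : j < i := by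
        rcases lt_trichotomy i j with h1 | h1 | h1
        · exact absurd (hdec h1) (not_lt.mpr (le_of_lt h))
        · subst h1; exact absurd rfl (ne_of_lt hij)
        · exact h1
      have : rhat i ≤ rhat j := hanti j i hji.le
      have : gfun a K (rhat i) ≥ gfun a K (rhat j) :=
        gfun_anti a K ha0 (hr0C.1 (σ i)).1 this
      exact absurd hij (not_lt.mpr this)
    have := hantiv.sum_mul_le_sum_mul_comp_perm (σ := σ⁻¹)
    have hkey : ∀ m, gfun a K (rhat (σ⁻¹ m)) = gfun a K (r0 m) := by
      intro m; simp [rhat]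
    calc ∑ m, p m * gfun a K (rhat m)
        ≤ ∑ m, p m * gfun a K (rhat (σ⁻¹ m)) := this
      _ = ∑ m, p m * gfun a K (r0 m) := by simp only [hkey]
  refine ⟨rhat, hrhatC.1, hrhatC.2, ?_, hanti⟩
  intro r hr1 hr2
  have hrC : r ∈ C := ⟨hr1, hr2⟩
  have h1 : ∑ m, p m * gfun a K (r0 m) ≤ ∑ m, p m * gfun a K (r m) := hr0min hrC
  have := hre.trans h1
  simpa [gfun] using this
end

section
/- Let p₁ > p₂ > ⋯ > p_M > 0 be strictly decreasing positive reals, B > 0, and S > 0 with S ≤ M·B. Suppose m₁ ∈ {1, …, M} is such that, setting S′ = S − (m₁−1)·B and t = S′ / ∑_{j=m₁}^M √p_j, one has S′ > 0, t·√p_{m₁} ≤ B, and (m₁ = 1 or t·√p_{m₁−1} ≥ B). Define x̂_m = B for m < m₁ and x̂_m = t·√p_m for m ≥ m₁. Then x̂ is feasible and minimizes ∑_{m=1}^M p_m / x_m over { x ∈ ℝ^M : 0 < x_m ≤ B for all m, ∑_{m=1}^M x_m ≤ S }. -/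
private lemma conv_aux (p a x : ℝ) (hp : 0 < p) (ha : 0 < a) (hx : 0 < x) :
    p / a ^ 2 * (a - x) ≤ p / x - p / a := by
  have h : p / x - p / a - p / a ^ 2 * (a - x) = p * (a - x) ^ 2 / (a ^ 2 * x) := by
    field_simp
  have h0 : (0:ℝ) ≤ p * (a - x) ^ 2 / (a ^ 2 * x) := by positivity
  linarith

/-- Proposition 1 (exact form): the two-part (capped water-filling) allocation
`x̂_m = B` for `m < m₁` and `x̂_m = t √p_m` for `m ≥ m₁` is feasible and
minimizes `∑ p_m / x_m` over `{0 < x_m ≤ B, ∑ x_m ≤ S}`. -/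
theorem two_part_waterfilling_optimal (M : ℕ) (hM : 1 ≤ M)
    (p : ℕ → ℝ) (hp : ∀ m, 1 ≤ m → m ≤ M → 0 < p m)
    (hdec : ∀ i j, 1 ≤ i → i < j → j ≤ M → p j < p i)
    (B S : ℝ) (hB : 0 < B) (hS : 0 < S) (hSMB : S ≤ M * B)
    (m₁ : ℕ) (hm₁l : 1 ≤ m₁) (hm₁u : m₁ ≤ M)
    (S' t : ℝ)
    (hS'def : S' = S - ((m₁ - 1 : ℕ) : ℝ) * B)
    (htdef : t = S' / ∑ j ∈ Finset.Icc m₁ M, Real.sqrt (p j))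
    (hS'pos : 0 < S')
    (hcap : t * Real.sqrt (p m₁) ≤ B)
    (hlow : m₁ = 1 ∨ B ≤ t * Real.sqrt (p (m₁ - 1)))
    (xhat : ℕ → ℝ)
    (hxhat : ∀ m, 1 ≤ m → m ≤ M →
      xhat m = if m < m₁ then B else t * Real.sqrt (p m)) :
    ((∀ m, 1 ≤ m → m ≤ M → 0 < xhat m ∧ xhat m ≤ B) ∧
      ∑ m ∈ Finset.Icc 1 M, xhat m ≤ S) ∧
    ∀ x : ℕ → ℝ, (∀ m, 1 ≤ m → m ≤ M → 0 < x m ∧ x m ≤ B) →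
      ∑ m ∈ Finset.Icc 1 M, x m ≤ S →
      ∑ m ∈ Finset.Icc 1 M, p m / xhat m ≤ ∑ m ∈ Finset.Icc 1 M, p m / x m := by
  have hsum_pos : 0 < ∑ j ∈ Finset.Icc m₁ M, Real.sqrt (p j) := by
    apply Finset.sum_pos' (fun j _ => Real.sqrt_nonneg _)
    exact ⟨m₁, Finset.mem_Icc.mpr ⟨le_refl _, hm₁u⟩, Real.sqrt_pos.mpr (hp m₁ hm₁l hm₁u)⟩
  have ht : 0 < t := htdef ▸ div_pos hS'pos hsum_pos
  have hmono : ∀ i j, 1 ≤ i → i ≤ j → j ≤ M → p j ≤ p i := by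
    intro i j hi hij hj
    rcases eq_or_lt_of_le hij with h | h
    · rw [h]
    · exact (hdec i j hi h hj).le
  -- pointwise feasibility
  have hfeas : ∀ m, 1 ≤ m → m ≤ M → 0 < xhat m ∧ xhat m ≤ B := by
    intro m h1 h2
    rw [hxhat m h1 h2]
    by_cases h : m < m₁
    · simp [h, hB]
    · push_neg at h
      rw [if_neg (not_lt.mpr h)]
      refine ⟨mul_pos ht (Real.sqrt_pos.mpr (hp m h1 h2)), ?_⟩
      calc t * Real.sqrt (p m) ≤ t * Real.sqrt (p m₁) :=
            mul_le_mul_of_nonneg_left (Real.sqrt_le_sqrt (hmono m₁ m hm₁l h h2)) ht.le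
        _ ≤ B := hcap
  -- sum splitting
  have hsum_split : ∀ f : ℕ → ℝ, ∑ m ∈ Finset.Icc 1 M, f m
      = ∑ m ∈ Finset.Ico 1 m₁, f m + ∑ m ∈ Finset.Icc m₁ M, f m := by
    intro f
    rw [← Finset.Ico_add_one_right_eq_Icc m₁ M, ← Finset.Ico_add_one_right_eq_Icc 1 M,
      Finset.sum_Ico_consecutive _ hm₁l (by omega : m₁ ≤ M + 1)]
  -- total of xhat equals S
  have hxhat_sum : ∑ m ∈ Finset.Icc 1 M, xhat m = S := by
    rw [hsum_split]
    have h1 : ∑ m ∈ Finset.Ico 1 m₁, xhat m = ((m₁ - 1 : ℕ) : ℝ) * B := by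
      rw [Finset.sum_congr rfl (fun m hm => ?_), Finset.sum_const, Nat.card_Ico,
        nsmul_eq_mul]
      · rw [Finset.mem_Ico] at hm
        rw [hxhat m hm.1 (by omega), if_pos hm.2]
    have h2 : ∑ m ∈ Finset.Icc m₁ M, xhat m = S' := by
      have : ∑ m ∈ Finset.Icc m₁ M, xhat m
          = ∑ m ∈ Finset.Icc m₁ M, t * Real.sqrt (p m) := by
        refine Finset.sum_congr rfl (fun m hm => ?_)
        rw [Finset.mem_Icc] at hm
        rw [hxhat m (by omega) hm.2, if_neg (not_lt.mpr hm.1)]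
      rw [this, ← Finset.mul_sum, htdef, div_mul_cancel₀ _ hsum_pos.ne']
    rw [h1, h2, hS'def]; ring
  refine ⟨⟨hfeas, le_of_eq hxhat_sum⟩, ?_⟩
  intro x hx hxs
  -- pointwise key inequality
  have hkey : ∀ m ∈ Finset.Icc 1 M,
      p m / xhat m + (1 / t ^ 2) * (xhat m - x m) ≤ p m / x m := by
    intro m hm
    rw [Finset.mem_Icc] at hm
    obtain ⟨h1, h2⟩ := hm
    have hpm := hp m h1 h2
    obtain ⟨hxp, hxB⟩ := hx m h1 h2
    obtain ⟨hap, _⟩ := hfeas m h1 h2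
    have hconv := conv_aux (p m) (xhat m) (x m) hpm hap hxp
    have hmul : (1 / t ^ 2) * (xhat m - x m) ≤ p m / xhat m ^ 2 * (xhat m - x m) := by
      by_cases h : m < m₁
      · -- xhat m = B, and B ≤ t √p m, B - x m ≥ 0
        have hxeq : xhat m = B := by rw [hxhat m h1 h2, if_pos h]
        have hm₁2 : 2 ≤ m₁ := by omega
        have hBp : B ≤ t * Real.sqrt (p m) := by
          rcases hlow with h' | h'
          · omega
          · calc B ≤ t * Real.sqrt (p (m₁ - 1)) := h'
              _ ≤ t * Real.sqrt (p m) := by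
                  exact mul_le_mul_of_nonneg_left
                    (Real.sqrt_le_sqrt (hmono m (m₁ - 1) h1 (by omega) (by omega))) ht.le
        have hsq : B ^ 2 ≤ t ^ 2 * p m := by
          have := Real.sq_sqrt hpm.le
          nlinarith [Real.sqrt_nonneg (p m)]
        have hcoef : 1 / t ^ 2 ≤ p m / B ^ 2 := by
          rw [div_le_div_iff₀ (by positivity) (by positivity)]
          nlinarith
        rw [hxeq]
        exact mul_le_mul_of_nonneg_right hcoef (by linarith)
      · -- xhat m = t √p m, coefficient equals 1/t²
        have hxeq : xhat m = t * Real.sqrt (p m) := by rw [hxhat m h1 h2, if_neg h]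
        have hsq : xhat m ^ 2 = t ^ 2 * p m := by
          rw [hxeq, mul_pow, Real.sq_sqrt hpm.le]
        have : p m / xhat m ^ 2 = 1 / t ^ 2 := by
          rw [hsq]
          field_simp
        rw [this]
    linarith
  have hsum_le := Finset.sum_le_sum hkey
  rw [Finset.sum_add_distrib, ← Finset.mul_sum, Finset.sum_sub_distrib, hxhat_sum]
    at hsum_le
  have hnn : 0 ≤ (1 / t ^ 2) * (S - ∑ m ∈ Finset.Icc 1 M, x m) := by
    apply mul_nonneg (by positivity)
    linarith
  linarith
end

section
/- Under the hypotheses of the preceding water-filling optimality statement (p strictly decreasing and positive, B > 0, S ≤ MB, index m₁ with S′ = S − (m₁−1)B > 0, t = S′/∑_{j=m₁}^M √p_j, t√p_{m₁} ≤ B, and m₁ = 1 or t√p_{m₁−1} ≥ B), the minimum value of ∑_{m=1}^M p_m/x_m over { x : 0 < x_m ≤ B, ∑_m x_m ≤ S } equals (1/B)·∑_{m=1}^{m₁−1} p_m + (∑_{m=m₁}^M √p_m)² / S′. -/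
private lemma conv_aux_s5 (pp a b : ℝ) (hpp : 0 < pp) (ha : 0 < a) (hb : 0 < b) :
    pp / b + pp / b ^ 2 * (b - a) ≤ pp / a := by
  have h : pp / a - (pp / b + pp / b ^ 2 * (b - a)) = pp * (a - b) ^ 2 / (a * b ^ 2) := by
    field_simp; ring
  have h2 : 0 ≤ pp * (a - b) ^ 2 / (a * b ^ 2) := by positivity
  linarith

/-- Theorem 2 (exact value, eq. (E.1)): under the KKT threshold conditions, the
minimum of `∑ p_m / x_m` over `{0 < x_m ≤ B, ∑ x_m ≤ S}` equals
`(1/B) ∑_{m<m₁} p_m + (∑_{m≥m₁} √p_m)² / S'`. -/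
theorem two_part_waterfilling_min_value (M : ℕ) (hM : 1 ≤ M)
    (p : ℕ → ℝ) (hp : ∀ m, 1 ≤ m → m ≤ M → 0 < p m)
    (hdec : ∀ i j, 1 ≤ i → i < j → j ≤ M → p j < p i)
    (B S : ℝ) (hB : 0 < B) (hS : 0 < S) (hSMB : S ≤ M * B)
    (m₁ : ℕ) (hm₁l : 1 ≤ m₁) (hm₁u : m₁ ≤ M)
    (S' t : ℝ)
    (hS'def : S' = S - ((m₁ - 1 : ℕ) : ℝ) * B)
    (htdef : t = S' / ∑ j ∈ Finset.Icc m₁ M, Real.sqrt (p j))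
    (hS'pos : 0 < S')
    (hcap : t * Real.sqrt (p m₁) ≤ B)
    (hlow : m₁ = 1 ∨ B ≤ t * Real.sqrt (p (m₁ - 1))) :
    IsLeast { y : ℝ | ∃ x : ℕ → ℝ, (∀ m, 1 ≤ m → m ≤ M → 0 < x m ∧ x m ≤ B) ∧
        ∑ m ∈ Finset.Icc 1 M, x m ≤ S ∧ y = ∑ m ∈ Finset.Icc 1 M, p m / x m }
      ((1 / B) * ∑ m ∈ Finset.Icc 1 (m₁ - 1), p m +
        (∑ m ∈ Finset.Icc m₁ M, Real.sqrt (p m)) ^ 2 / S') := by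
  obtain ⟨k, rfl⟩ : ∃ k, m₁ = k + 1 := ⟨m₁ - 1, (Nat.succ_pred_eq_of_pos hm₁l).symm⟩
  simp only [Nat.add_sub_cancel] at *
  have hkM : k ≤ M := le_trans (Nat.le_succ k) hm₁u
  -- monotonicity
  have hpmono : ∀ i j, 1 ≤ i → i ≤ j → j ≤ M → p j ≤ p i := by
    intro i j hi hij hj
    rcases eq_or_lt_of_le hij with h | h
    · rw [h]
    · exact (hdec i j hi h hj).le
  set Q := ∑ j ∈ Finset.Icc (k + 1) M, Real.sqrt (p j) with hQdef
  have hpk1 : 0 < p (k + 1) := hp (k + 1) (by omega) hm₁u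
  have hQpos : 0 < Q := by
    apply Finset.sum_pos'
    · intro i _; exact Real.sqrt_nonneg _
    · exact ⟨k + 1, Finset.mem_Icc.2 ⟨le_refl _, hm₁u⟩, Real.sqrt_pos.2 hpk1⟩
  have htpos : 0 < t := by rw [htdef]; exact div_pos hS'pos hQpos
  have htQ : t * Q = S' := by rw [htdef]; field_simp
  -- sum splitting
  have hIoc : ∀ a b : ℕ, Finset.Icc (a + 1) b = Finset.Ioc a b := by
    intro a b; ext x; simp only [Finset.mem_Icc, Finset.mem_Ioc]; omega
  have hI1 : Finset.Icc 1 M = Finset.Ioc 0 M := by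
    have := hIoc 0 M; norm_num at this; exact this
  have hI2 : Finset.Icc 1 k = Finset.Ioc 0 k := by
    have := hIoc 0 k; norm_num at this; exact this
  have hsplit : ∀ f : ℕ → ℝ, ∑ m ∈ Finset.Icc 1 M, f m =
      ∑ m ∈ Finset.Icc 1 k, f m + ∑ m ∈ Finset.Icc (k + 1) M, f m := by
    intro f
    rw [hI1, hI2, hIoc k M]
    exact (Finset.sum_Ioc_consecutive f (Nat.zero_le k) hkM).symm
  -- the water-filling allocation
  set xhat : ℕ → ℝ := fun m => if m ≤ k then B else t * Real.sqrt (p m) with hxhat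
  have hxpos : ∀ m, 1 ≤ m → m ≤ M → 0 < xhat m ∧ xhat m ≤ B := by
    intro m h1 h2
    by_cases hmk : m ≤ k
    · simp only [hxhat, if_pos hmk]; exact ⟨hB, le_refl B⟩
    · simp only [hxhat, if_neg hmk]
      have hpm : 0 < p m := hp m h1 h2
      constructor
      · exact mul_pos htpos (Real.sqrt_pos.2 hpm)
      · calc t * Real.sqrt (p m) ≤ t * Real.sqrt (p (k + 1)) := by
              apply mul_le_mul_of_nonneg_left _ htpos.le
              exact Real.sqrt_le_sqrt (hpmono (k + 1) m (by omega) (by omega) h2)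
          _ ≤ B := hcap
  have hheadk : ∀ m ∈ Finset.Icc 1 k, (fun m => xhat m) m = B := by
    intro m hm
    have := Finset.mem_Icc.1 hm
    simp only [hxhat, if_pos this.2]
  have hxsum : ∑ m ∈ Finset.Icc 1 M, xhat m = S := by
    rw [hsplit]
    have h1 : ∑ m ∈ Finset.Icc 1 k, xhat m = (k : ℝ) * B := by
      rw [Finset.sum_congr rfl hheadk, Finset.sum_const, Nat.card_Icc]
      simp [Nat.add_sub_cancel]
    have h2 : ∑ m ∈ Finset.Icc (k + 1) M, xhat m = t * Q := by
      rw [hQdef, Finset.mul_sum]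
      apply Finset.sum_congr rfl
      intro m hm
      have := Finset.mem_Icc.1 hm
      simp only [hxhat, if_neg (by omega : ¬ m ≤ k)]
    rw [h1, h2, htQ, hS'def]; ring
  -- value at xhat
  have htail : ∀ m ∈ Finset.Icc (k + 1) M, p m / xhat m = Real.sqrt (p m) / t := by
    intro m hm
    have hmm := Finset.mem_Icc.1 hm
    have hpm : 0 < p m := hp m (by omega) hmm.2
    have hsq : Real.sqrt (p m) * Real.sqrt (p m) = p m := Real.mul_self_sqrt hpm.le
    have hsp : 0 < Real.sqrt (p m) := Real.sqrt_pos.2 hpm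
    simp only [hxhat, if_neg (by omega : ¬ m ≤ k)]
    rw [div_eq_div_iff (by positivity) htpos.ne']
    nlinarith [hsq]
  have hLval : ∑ m ∈ Finset.Icc 1 M, p m / xhat m =
      (1 / B) * ∑ m ∈ Finset.Icc 1 k, p m + Q ^ 2 / S' := by
    rw [hsplit]
    have h1 : ∑ m ∈ Finset.Icc 1 k, p m / xhat m = (1 / B) * ∑ m ∈ Finset.Icc 1 k, p m := by
      rw [Finset.mul_sum]
      apply Finset.sum_congr rfl
      intro m hm
      have := Finset.mem_Icc.1 hm
      simp only [hxhat, if_pos this.2]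
      ring
    have h2 : ∑ m ∈ Finset.Icc (k + 1) M, p m / xhat m = Q ^ 2 / S' := by
      rw [Finset.sum_congr rfl htail, ← Finset.sum_div, ← hQdef]
      rw [← htQ]
      field_simp
    rw [h1, h2]
  constructor
  · exact ⟨xhat, hxpos, le_of_eq hxsum, hLval.symm⟩
  · rintro y ⟨x, hx, hxs, rfl⟩
    -- head coefficient bound
    have hhead2 : ∀ m, 1 ≤ m → m ≤ k → B ^ 2 ≤ t ^ 2 * p m := by
      intro m h1 h2
      rcases hlow with h | h
      · omega
      · have hpk : 0 < p k := hp k (by omega) (by omega)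
        have hle : Real.sqrt (p k) ≤ Real.sqrt (p m) :=
          Real.sqrt_le_sqrt (hpmono m k h1 h2 (by omega))
        have hBm : B ≤ t * Real.sqrt (p m) :=
          le_trans h (mul_le_mul_of_nonneg_left hle htpos.le)
        have hpm : 0 < p m := hp m h1 (by omega)
        have hsq : Real.sqrt (p m) * Real.sqrt (p m) = p m := Real.mul_self_sqrt hpm.le
        nlinarith [Real.sqrt_nonneg (p m)]
    have hterm : ∀ m ∈ Finset.Icc 1 M,
        p m / xhat m + 1 / t ^ 2 * (xhat m - x m) ≤ p m / x m := by
      intro m hm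
      have hmm := Finset.mem_Icc.1 hm
      have hpm : 0 < p m := hp m hmm.1 hmm.2
      obtain ⟨hx1, hx2⟩ := hx m hmm.1 hmm.2
      by_cases hmk : m ≤ k
      · simp only [hxhat, if_pos hmk]
        have key := conv_aux_s5 (p m) (x m) B hpm hx1 hB
        have hcoef : 1 / t ^ 2 ≤ p m / B ^ 2 := by
          rw [div_le_div_iff₀ (by positivity) (by positivity)]
          nlinarith [hhead2 m hmm.1 hmk]
        have : 1 / t ^ 2 * (B - x m) ≤ p m / B ^ 2 * (B - x m) :=
          mul_le_mul_of_nonneg_right hcoef (by linarith)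
        linarith
      · simp only [hxhat, if_neg hmk]
        have hsp : 0 < Real.sqrt (p m) := Real.sqrt_pos.2 hpm
        have hxb : 0 < t * Real.sqrt (p m) := mul_pos htpos hsp
        have key := conv_aux_s5 (p m) (x m) (t * Real.sqrt (p m)) hpm hx1 hxb
        have hc : p m / (t * Real.sqrt (p m)) ^ 2 = 1 / t ^ 2 := by
          rw [mul_pow, Real.sq_sqrt hpm.le]
          field_simp
        rw [hc] at key
        exact key
    have hsum2 := Finset.sum_le_sum hterm
    rw [Finset.sum_add_distrib, ← Finset.mul_sum, Finset.sum_sub_distrib, hxsum] at hsum2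
    have hnn : 0 ≤ 1 / t ^ 2 * (S - ∑ m ∈ Finset.Icc 1 M, x m) := by
      apply mul_nonneg (by positivity)
      linarith
    rw [hLval] at hsum2
    linarith
end

section
/- Let p₁ > p₂ > ⋯ > p_M > 0 be strictly decreasing positive reals and 0 < K < B reals with M·K ≤ S ≤ M·B. Suppose indices 1 ≤ m₁ ≤ m₂ ≤ M+1 with m₁ < m₂ are such that, setting S′ = S − (m₁−1)·B − (M − m₂ + 1)·K and t = S′/∑_{j=m₁}^{m₂−1} √p_j, one has S′ > 0, t·√p_{m₁} ≤ B, (m₁ = 1 or t·√p_{m₁−1} ≥ B), t·√p_{m₂−1} ≥ K, and (m₂ = M+1 or t·√p_{m₂} ≤ K). Define r̂_m = B for m < m₁, r̂_m = t·√p_m for m₁ ≤ m < m₂, and r̂_m = K for m ≥ m₂. Then r̂ is feasible and minimizes ∑_{m=1}^M p_m / r_m over { r ∈ ℝ^M : K ≤ r_m ≤ B for all m, ∑_{m=1}^M r_m ≤ S }. -/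
/-- Tangent-line inequality for the convex function `x ↦ p / x`. -/
lemma tangent_div (p a r : ℝ) (hp : 0 < p) (ha : 0 < a) (hr : 0 < r) :
    p / a ≤ p / r + (p / a ^ 2) * (r - a) := by
  have key : p / r + (p / a ^ 2) * (r - a) - p / a = p * (r - a) ^ 2 / (r * a ^ 2) := by
    field_simp
    ring
  nlinarith [sq_nonneg (r - a), mul_pos hr (mul_pos ha ha),
    div_nonneg (mul_nonneg hp.le (sq_nonneg (r - a))) (by positivity : (0:ℝ) ≤ r * a ^ 2),
    key]

/-- Proposition 2 (exact form): the three-part (doubly clamped water-filling)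
allocation `r̂_m = B` for `m < m₁`, `r̂_m = t √p_m` for `m₁ ≤ m < m₂`, and
`r̂_m = K` for `m ≥ m₂` is feasible and minimizes `∑ p_m / r_m` over
`{K ≤ r_m ≤ B, ∑ r_m ≤ S}`. -/
theorem three_part_waterfilling_optimal (M : ℕ) (hM : 1 ≤ M)
    (p : ℕ → ℝ) (hp : ∀ m, 1 ≤ m → m ≤ M → 0 < p m)
    (hdec : ∀ i j, 1 ≤ i → i < j → j ≤ M → p j < p i)
    (K B S : ℝ) (hK : 0 < K) (hKB : K < B)
    (hMKS : M * K ≤ S) (hSMB : S ≤ M * B)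
    (m₁ m₂ : ℕ) (hm₁l : 1 ≤ m₁) (hm₁₂ : m₁ < m₂) (hm₂u : m₂ ≤ M + 1)
    (S' t : ℝ)
    (hS'def : S' = S - ((m₁ - 1 : ℕ) : ℝ) * B - ((M + 1 - m₂ : ℕ) : ℝ) * K)
    (htdef : t = S' / ∑ j ∈ Finset.Icc m₁ (m₂ - 1), Real.sqrt (p j))
    (hS'pos : 0 < S')
    (hcap₁ : t * Real.sqrt (p m₁) ≤ B)
    (hlow₁ : m₁ = 1 ∨ B ≤ t * Real.sqrt (p (m₁ - 1)))
    (hcap₂ : K ≤ t * Real.sqrt (p (m₂ - 1)))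
    (hlow₂ : m₂ = M + 1 ∨ t * Real.sqrt (p m₂) ≤ K)
    (rhat : ℕ → ℝ)
    (hrhat : ∀ m, 1 ≤ m → m ≤ M →
      rhat m = if m < m₁ then B else if m < m₂ then t * Real.sqrt (p m) else K) :
    ((∀ m, 1 ≤ m → m ≤ M → K ≤ rhat m ∧ rhat m ≤ B) ∧
      ∑ m ∈ Finset.Icc 1 M, rhat m ≤ S) ∧
    ∀ r : ℕ → ℝ, (∀ m, 1 ≤ m → m ≤ M → K ≤ r m ∧ r m ≤ B) →
      ∑ m ∈ Finset.Icc 1 M, r m ≤ S →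
      ∑ m ∈ Finset.Icc 1 M, p m / rhat m ≤ ∑ m ∈ Finset.Icc 1 M, p m / r m := by
  -- basic index facts
  have hm₁M : m₁ ≤ M := by omega
  have hm₂1M : m₂ - 1 ≤ M := by omega
  have hm₁m₂1 : m₁ ≤ m₂ - 1 := by omega
  -- monotonicity of p
  have hmono : ∀ i j, 1 ≤ i → i ≤ j → j ≤ M → p j ≤ p i := by
    intro i j hi hij hj
    rcases eq_or_lt_of_le hij with h | h
    · simp [h]
    · exact (hdec i j hi h hj).le
  -- positivity of the denominator sum and of t
  set D := ∑ j ∈ Finset.Icc m₁ (m₂ - 1), Real.sqrt (p j) with hD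
  have hDpos : 0 < D := by
    apply Finset.sum_pos
    · intro j hj
      rw [Finset.mem_Icc] at hj
      exact Real.sqrt_pos.mpr (hp j (by omega) (by omega))
    · exact ⟨m₁, by rw [Finset.mem_Icc]; omega⟩
  have htpos : 0 < t := by rw [htdef]; exact div_pos hS'pos hDpos
  have htD : t * D = S' := by rw [htdef]; field_simp
  -- monotonicity of t * sqrt p
  have htsqrt : ∀ i j, 1 ≤ i → i ≤ j → j ≤ M →
      t * Real.sqrt (p j) ≤ t * Real.sqrt (p i) := by
    intro i j hi hij hj
    exact mul_le_mul_of_nonneg_left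
      (Real.sqrt_le_sqrt (hmono i j hi hij hj)) htpos.le
  -- pointwise bounds on rhat
  have hbounds : ∀ m, 1 ≤ m → m ≤ M → K ≤ rhat m ∧ rhat m ≤ B := by
    intro m h1 h2
    rw [hrhat m h1 h2]
    split_ifs with hlt hlt2
    · exact ⟨hKB.le, le_refl B⟩
    · constructor
      · calc K ≤ t * Real.sqrt (p (m₂ - 1)) := hcap₂
          _ ≤ t * Real.sqrt (p m) := htsqrt m (m₂ - 1) h1 (by omega) hm₂1M
      · calc t * Real.sqrt (p m) ≤ t * Real.sqrt (p m₁) :=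
            htsqrt m₁ m hm₁l (by omega) h2
          _ ≤ B := hcap₁
    · exact ⟨le_refl K, hKB.le⟩
  -- the total allocation is exactly S
  have hsumhat : ∑ m ∈ Finset.Icc 1 M, rhat m = S := by
    have hIcc : Finset.Icc 1 M = Finset.Ioc 0 M := by
      ext x; simp [Finset.mem_Icc, Finset.mem_Ioc]; omega
    have h1 : (∑ m ∈ Finset.Ioc 0 (m₁ - 1), rhat m)
        + (∑ m ∈ Finset.Ioc (m₁ - 1) (m₂ - 1), rhat m)
        = ∑ m ∈ Finset.Ioc 0 (m₂ - 1), rhat m :=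
      Finset.sum_Ioc_consecutive _ (by omega) (by omega)
    have h2 : (∑ m ∈ Finset.Ioc 0 (m₂ - 1), rhat m)
        + (∑ m ∈ Finset.Ioc (m₂ - 1) M, rhat m)
        = ∑ m ∈ Finset.Ioc 0 M, rhat m :=
      Finset.sum_Ioc_consecutive _ (by omega) (by omega)
    have e1 : ∑ m ∈ Finset.Ioc 0 (m₁ - 1), rhat m = ((m₁ - 1 : ℕ) : ℝ) * B := by
      have hc : ∀ m ∈ Finset.Ioc 0 (m₁ - 1), rhat m = B := by
        intro m hm
        rw [Finset.mem_Ioc] at hm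
        rw [hrhat m (by omega) (by omega), if_pos (by omega : m < m₁)]
      rw [Finset.sum_congr rfl hc, Finset.sum_const, Nat.card_Ioc, nsmul_eq_mul]
      norm_num
    have e2 : ∑ m ∈ Finset.Ioc (m₁ - 1) (m₂ - 1), rhat m = S' := by
      have hset : Finset.Ioc (m₁ - 1) (m₂ - 1) = Finset.Icc m₁ (m₂ - 1) := by
        ext x; simp [Finset.mem_Icc, Finset.mem_Ioc]; omega
      have hc : ∀ m ∈ Finset.Icc m₁ (m₂ - 1), rhat m = t * Real.sqrt (p m) := by
        intro m hm
        rw [Finset.mem_Icc] at hm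
        rw [hrhat m (by omega) (by omega), if_neg (by omega : ¬ m < m₁),
          if_pos (by omega : m < m₂)]
      rw [hset, Finset.sum_congr rfl hc, ← Finset.mul_sum, ← hD, htD]
    have e3 : ∑ m ∈ Finset.Ioc (m₂ - 1) M, rhat m = ((M + 1 - m₂ : ℕ) : ℝ) * K := by
      have hc : ∀ m ∈ Finset.Ioc (m₂ - 1) M, rhat m = K := by
        intro m hm
        rw [Finset.mem_Ioc] at hm
        rw [hrhat m (by omega) (by omega), if_neg (by omega : ¬ m < m₁),
          if_neg (by omega : ¬ m < m₂)]
      rw [Finset.sum_congr rfl hc, Finset.sum_const, Nat.card_Ioc, nsmul_eq_mul]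
      congr 2
      omega
    rw [hIcc, ← h2, ← h1, e1, e2, e3, hS'def]
    ring
  refine ⟨⟨hbounds, by rw [hsumhat]⟩, ?_⟩
  -- optimality
  intro r hr hrS
  have hperterm : ∀ m ∈ Finset.Icc 1 M,
      p m / rhat m ≤ p m / r m + (1 / t ^ 2) * (r m - rhat m) := by
    intro m hm
    rw [Finset.mem_Icc] at hm
    obtain ⟨h1, h2⟩ := hm
    have hpm : 0 < p m := hp m h1 h2
    have hrhatpos : 0 < rhat m := lt_of_lt_of_le hK (hbounds m h1 h2).1
    have hrpos : 0 < r m := lt_of_lt_of_le hK (hr m h1 h2).1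
    have htan := tangent_div (p m) (rhat m) (r m) hpm hrhatpos hrpos
    have hstep : (p m / (rhat m) ^ 2) * (r m - rhat m)
        ≤ (1 / t ^ 2) * (r m - rhat m) := by
      have hBpos : 0 < B := hK.trans hKB
      rw [hrhat m h1 h2]
      split_ifs with hlt hlt2
      · -- m < m₁ : r m - B ≤ 0 and p m / B² ≥ 1 / t²
        have hB' : B ≤ t * Real.sqrt (p m) := by
          rcases hlow₁ with h | h
          · omega
          · calc B ≤ t * Real.sqrt (p (m₁ - 1)) := h
              _ ≤ t * Real.sqrt (p m) := htsqrt m (m₁ - 1) h1 (by omega) (by omega)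
        have heq : (t * Real.sqrt (p m)) ^ 2 = t ^ 2 * p m := by
          rw [mul_pow, Real.sq_sqrt hpm.le]
        have hsq : B ^ 2 ≤ t ^ 2 * p m := by
          have := pow_le_pow_left₀ hBpos.le hB' 2
          rwa [heq] at this
        have hcoef : 1 / t ^ 2 ≤ p m / B ^ 2 := by
          rw [div_le_div_iff₀ (by positivity) (pow_pos hBpos 2)]
          nlinarith [hsq]
        have hrB : r m - B ≤ 0 := by linarith [(hr m h1 h2).2]
        exact mul_le_mul_of_nonpos_right hcoef hrB
      · -- middle regime: equality of coefficients
        have : p m / (t * Real.sqrt (p m)) ^ 2 = 1 / t ^ 2 := by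
          rw [mul_pow, Real.sq_sqrt hpm.le]
          field_simp
        rw [this]
      · -- m ≥ m₂ : r m - K ≥ 0 and p m / K² ≤ 1 / t²
        have hK' : t * Real.sqrt (p m) ≤ K := by
          rcases hlow₂ with h | h
          · omega
          · calc t * Real.sqrt (p m) ≤ t * Real.sqrt (p m₂) :=
                htsqrt m₂ m (by omega) (by omega) h2
              _ ≤ K := h
        have heq : (t * Real.sqrt (p m)) ^ 2 = t ^ 2 * p m := by
          rw [mul_pow, Real.sq_sqrt hpm.le]
        have hsq : t ^ 2 * p m ≤ K ^ 2 := by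
          have := pow_le_pow_left₀ (by positivity : (0:ℝ) ≤ t * Real.sqrt (p m)) hK' 2
          rwa [heq] at this
        have hcoef : p m / K ^ 2 ≤ 1 / t ^ 2 := by
          rw [div_le_div_iff₀ (pow_pos hK 2) (by positivity)]
          nlinarith [hsq]
        have hrK : 0 ≤ r m - K := by linarith [(hr m h1 h2).1]
        exact mul_le_mul_of_nonneg_right hcoef hrK
    linarith
  calc ∑ m ∈ Finset.Icc 1 M, p m / rhat m
      ≤ ∑ m ∈ Finset.Icc 1 M, (p m / r m + (1 / t ^ 2) * (r m - rhat m)) :=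
        Finset.sum_le_sum hperterm
    _ = ∑ m ∈ Finset.Icc 1 M, p m / r m
        + (1 / t ^ 2) * ((∑ m ∈ Finset.Icc 1 M, r m) - ∑ m ∈ Finset.Icc 1 M, rhat m) := by
        rw [Finset.sum_add_distrib, ← Finset.mul_sum, Finset.sum_sub_distrib]
    _ ≤ ∑ m ∈ Finset.Icc 1 M, p m / r m := by
        have hle : (∑ m ∈ Finset.Icc 1 M, r m) - ∑ m ∈ Finset.Icc 1 M, rhat m ≤ 0 := by
          rw [hsumhat]; linarith
        have := mul_nonpos_of_nonneg_of_nonpos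
          (by positivity : (0:ℝ) ≤ 1 / t ^ 2) hle
        linarith
end

section
/- Under the hypotheses of the preceding clamped water-filling optimality statement (p strictly decreasing positive, 0 < K < B, MK ≤ S ≤ MB, indices m₁ < m₂ with S′ = S − (m₁−1)B − (M−m₂+1)K > 0, t = S′/∑_{j=m₁}^{m₂−1}√p_j satisfying t√p_{m₁} ≤ B, m₁ = 1 or t√p_{m₁−1} ≥ B, t√p_{m₂−1} ≥ K, and m₂ = M+1 or t√p_{m₂} ≤ K), the minimum value of ∑_{m=1}^M p_m/r_m over { r : K ≤ r_m ≤ B, ∑_m r_m ≤ S } equals (1/B)·∑_{m=1}^{m₁−1} p_m + (∑_{m=m₁}^{m₂−1} √p_m)² / S′ + (1/K)·∑_{m=m₂}^{M} p_m. -/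
private lemma aux_tangent (pm x y t : ℝ) (hx : 0 < x) (hy : 0 < y) (ht : 0 < t)
    (h : 0 ≤ (y - x) * (t ^ 2 * pm - x * y)) :
    pm / y + y / t ^ 2 ≤ pm / x + x / t ^ 2 := by
  rw [← sub_nonneg]
  have key : pm / x + x / t ^ 2 - (pm / y + y / t ^ 2)
      = (y - x) * (t ^ 2 * pm - x * y) / (x * y * t ^ 2) := by
    field_simp
    ring
  rw [key]
  exact div_nonneg h (by positivity)

/-- Theorem 3 (exact value, eq. (F.1)): under the KKT threshold conditions, the
minimum of `∑ p_m / r_m` over `{K ≤ r_m ≤ B, ∑ r_m ≤ S}` equals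
`(1/B) ∑_{m<m₁} p_m + (∑_{m₁≤m<m₂} √p_m)² / S' + (1/K) ∑_{m≥m₂} p_m`. -/
theorem three_part_waterfilling_min_value (M : ℕ) (hM : 1 ≤ M)
    (p : ℕ → ℝ) (hp : ∀ m, 1 ≤ m → m ≤ M → 0 < p m)
    (hdec : ∀ i j, 1 ≤ i → i < j → j ≤ M → p j < p i)
    (K B S : ℝ) (hK : 0 < K) (hKB : K < B)
    (hMKS : M * K ≤ S) (hSMB : S ≤ M * B)
    (m₁ m₂ : ℕ) (hm₁l : 1 ≤ m₁) (hm₁₂ : m₁ < m₂) (hm₂u : m₂ ≤ M + 1)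
    (S' t : ℝ)
    (hS'def : S' = S - ((m₁ - 1 : ℕ) : ℝ) * B - ((M + 1 - m₂ : ℕ) : ℝ) * K)
    (htdef : t = S' / ∑ j ∈ Finset.Icc m₁ (m₂ - 1), Real.sqrt (p j))
    (hS'pos : 0 < S')
    (hcap₁ : t * Real.sqrt (p m₁) ≤ B)
    (hlow₁ : m₁ = 1 ∨ B ≤ t * Real.sqrt (p (m₁ - 1)))
    (hcap₂ : K ≤ t * Real.sqrt (p (m₂ - 1)))
    (hlow₂ : m₂ = M + 1 ∨ t * Real.sqrt (p m₂) ≤ K) :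
    IsLeast { y : ℝ | ∃ r : ℕ → ℝ, (∀ m, 1 ≤ m → m ≤ M → K ≤ r m ∧ r m ≤ B) ∧
        ∑ m ∈ Finset.Icc 1 M, r m ≤ S ∧ y = ∑ m ∈ Finset.Icc 1 M, p m / r m }
      ((1 / B) * ∑ m ∈ Finset.Icc 1 (m₁ - 1), p m +
        (∑ m ∈ Finset.Icc m₁ (m₂ - 1), Real.sqrt (p m)) ^ 2 / S' +
        (1 / K) * ∑ m ∈ Finset.Icc m₂ M, p m) := by
  have hB : 0 < B := hK.trans hKB
  have hm₁M : m₁ ≤ M := by omega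
  have hm₂1 : 1 ≤ m₂ - 1 := by omega
  have hm₂M : m₂ - 1 ≤ M := by omega
  -- monotonicity
  have hmono : ∀ i j, 1 ≤ i → i ≤ j → j ≤ M → p j ≤ p i := by
    intro i j h1 h2 h3
    rcases eq_or_lt_of_le h2 with h | h
    · subst h; exact le_rfl
    · exact (hdec i j h1 h h3).le
  set Q : ℝ := ∑ j ∈ Finset.Icc m₁ (m₂ - 1), Real.sqrt (p j) with hQdef
  have hQpos : 0 < Q := by
    apply Finset.sum_pos
    · intro i hi
      rw [Finset.mem_Icc] at hi
      exact Real.sqrt_pos.mpr (hp i (le_trans hm₁l hi.1) (le_trans hi.2 hm₂M))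
    · exact ⟨m₁, Finset.mem_Icc.mpr ⟨le_rfl, by omega⟩⟩
  have ht0 : 0 < t := by rw [htdef]; exact div_pos hS'pos hQpos
  have htQ : t * Q = S' := by rw [htdef]; field_simp
  -- the optimal allocation
  set R : ℕ → ℝ := fun m => if m < m₁ then B else if m < m₂ then t * Real.sqrt (p m) else K
    with hRdef
  have hRbound : ∀ m, 1 ≤ m → m ≤ M → K ≤ R m ∧ R m ≤ B := by
    intro m h1 h2
    simp only [hRdef]
    by_cases hc1 : m < m₁
    · rw [if_pos hc1]; exact ⟨hKB.le, le_rfl⟩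
    · rw [if_neg hc1]
      by_cases hc2 : m < m₂
      · rw [if_pos hc2]
        constructor
        · refine le_trans hcap₂ ?_
          exact mul_le_mul_of_nonneg_left
            (Real.sqrt_le_sqrt (hmono m (m₂ - 1) h1 (by omega) hm₂M)) ht0.le
        · refine le_trans ?_ hcap₁
          exact mul_le_mul_of_nonneg_left
            (Real.sqrt_le_sqrt (hmono m₁ m hm₁l (by omega) h2)) ht0.le
      · rw [if_neg hc2]; exact ⟨le_rfl, hKB.le⟩
  -- splitting sums over [1,M]
  have hsplit : ∀ f : ℕ → ℝ, ∑ m ∈ Finset.Icc 1 M, f m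
      = ∑ m ∈ Finset.Icc 1 (m₁ - 1), f m + ∑ m ∈ Finset.Icc m₁ (m₂ - 1), f m
        + ∑ m ∈ Finset.Icc m₂ M, f m := by
    intro f
    have e1 : Finset.Icc 1 (m₁ - 1) = Finset.Ico 1 m₁ := by
      rw [← Finset.Ico_add_one_right_eq_Icc]; congr 1; omega
    have e2 : Finset.Icc m₁ (m₂ - 1) = Finset.Ico m₁ m₂ := by
      rw [← Finset.Ico_add_one_right_eq_Icc]; congr 1; omega
    have e3 : Finset.Icc m₂ M = Finset.Ico m₂ (M + 1) := by
      rw [← Finset.Ico_add_one_right_eq_Icc]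
    have e4 : Finset.Icc 1 M = Finset.Ico 1 (M + 1) := by
      rw [← Finset.Ico_add_one_right_eq_Icc]
    rw [e1, e2, e3, e4,
      Finset.sum_Ico_consecutive f (by omega : 1 ≤ m₁) (by omega : m₁ ≤ m₂),
      Finset.sum_Ico_consecutive f (by omega : 1 ≤ m₂) (by omega : m₂ ≤ M + 1)]
  -- values of R on each block
  have hRleft : ∀ m ∈ Finset.Icc 1 (m₁ - 1), R m = B := by
    intro m hm; rw [Finset.mem_Icc] at hm
    simp only [hRdef]; rw [if_pos (by omega)]
  have hRmid : ∀ m ∈ Finset.Icc m₁ (m₂ - 1), R m = t * Real.sqrt (p m) := by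
    intro m hm; rw [Finset.mem_Icc] at hm
    simp only [hRdef]; rw [if_neg (by omega), if_pos (by omega)]
  have hRright : ∀ m ∈ Finset.Icc m₂ M, R m = K := by
    intro m hm; rw [Finset.mem_Icc] at hm
    simp only [hRdef]; rw [if_neg (by omega), if_neg (by omega)]
  -- total mass of R
  have hRsum : ∑ m ∈ Finset.Icc 1 M, R m = S := by
    rw [hsplit R, Finset.sum_congr rfl hRleft, Finset.sum_congr rfl hRmid,
      Finset.sum_congr rfl hRright, Finset.sum_const, Finset.sum_const,
      ← Finset.mul_sum, ← hQdef]
    rw [Nat.card_Icc, Nat.card_Icc]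
    have c1 : m₁ - 1 + 1 - 1 = m₁ - 1 := by omega
    have c2 : M + 1 - m₂ = M + 1 - m₂ := rfl
    rw [c1, nsmul_eq_mul, nsmul_eq_mul, htQ]
    rw [hS'def]; ring
  -- objective value of R
  have hval : ∑ m ∈ Finset.Icc 1 M, p m / R m
      = (1 / B) * ∑ m ∈ Finset.Icc 1 (m₁ - 1), p m + Q ^ 2 / S'
        + (1 / K) * ∑ m ∈ Finset.Icc m₂ M, p m := by
    rw [hsplit (fun m => p m / R m)]
    have h1 : ∑ m ∈ Finset.Icc 1 (m₁ - 1), p m / R m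
        = (1 / B) * ∑ m ∈ Finset.Icc 1 (m₁ - 1), p m := by
      rw [Finset.mul_sum]
      refine Finset.sum_congr rfl fun m hm => ?_
      rw [hRleft m hm]; ring
    have h3 : ∑ m ∈ Finset.Icc m₂ M, p m / R m
        = (1 / K) * ∑ m ∈ Finset.Icc m₂ M, p m := by
      rw [Finset.mul_sum]
      refine Finset.sum_congr rfl fun m hm => ?_
      rw [hRright m hm]; ring
    have h2 : ∑ m ∈ Finset.Icc m₁ (m₂ - 1), p m / R m = Q ^ 2 / S' := by
      have step : ∀ m ∈ Finset.Icc m₁ (m₂ - 1), p m / R m = Real.sqrt (p m) / t := by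
        intro m hm
        have hmm := Finset.mem_Icc.mp hm
        have hpm : 0 < p m := hp m (le_trans hm₁l hmm.1) (le_trans hmm.2 hm₂M)
        have hs : 0 < Real.sqrt (p m) := Real.sqrt_pos.mpr hpm
        rw [hRmid m hm]
        rw [div_eq_div_iff (by positivity) ht0.ne']
        linear_combination (-t) * Real.mul_self_sqrt hpm.le
      rw [Finset.sum_congr rfl step, ← Finset.sum_div, ← hQdef, ← htQ, sq,
        mul_comm t Q, mul_div_mul_left _ _ hQpos.ne']
    rw [h1, h2, h3]
  constructor
  · -- membership
    refine ⟨R, hRbound, le_of_eq hRsum, ?_⟩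
    rw [hval]
  · -- lower bound
    rintro y ⟨r, hr, hrsum, rfl⟩
    have hrpos : ∀ m, 1 ≤ m → m ≤ M → 0 < r m := fun m h1 h2 => lt_of_lt_of_le hK (hr m h1 h2).1
    have key : ∀ m ∈ Finset.Icc 1 M,
        p m / R m + R m / t ^ 2 ≤ p m / r m + r m / t ^ 2 := by
      intro m hm
      have hmm := Finset.mem_Icc.mp hm
      have hpm : 0 < p m := hp m hmm.1 hmm.2
      have hrm := hr m hmm.1 hmm.2
      have hrm0 : 0 < r m := hrpos m hmm.1 hmm.2
      have hRm0 : 0 < R m := lt_of_lt_of_le hK (hRbound m hmm.1 hmm.2).1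
      apply aux_tangent _ _ _ _ hrm0 hRm0 ht0
      have hps : Real.sqrt (p m) * Real.sqrt (p m) = p m := Real.mul_self_sqrt hpm.le
      by_cases hc1 : m < m₁
      · have hRx : R m = B := by simp only [hRdef]; rw [if_pos hc1]
        rw [hRx]
        have hB' : B ≤ t * Real.sqrt (p (m₁ - 1)) := hlow₁.resolve_left (by omega)
        have hle : p (m₁ - 1) ≤ p m := hmono m (m₁ - 1) hmm.1 (by omega) (by omega)
        have hBt : B ≤ t * Real.sqrt (p m) :=
          hB'.trans (mul_le_mul_of_nonneg_left (Real.sqrt_le_sqrt hle) ht0.le)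
        have h2 : B * B ≤ (t * Real.sqrt (p m)) * (t * Real.sqrt (p m)) :=
          mul_self_le_mul_self hB.le hBt
        have h3 : t ^ 2 * p m = (t * Real.sqrt (p m)) * (t * Real.sqrt (p m)) := by
          linear_combination (-(t ^ 2)) * hps
        have h4 : 0 ≤ B - r m := sub_nonneg.mpr hrm.2
        have h4' : r m * B ≤ B * B := mul_le_mul_of_nonneg_right hrm.2 hB.le
        have h5 : r m * B ≤ t ^ 2 * p m := by linarith
        exact mul_nonneg h4 (sub_nonneg.mpr h5)
      · by_cases hc2 : m < m₂
        · have hRx : R m = t * Real.sqrt (p m) := by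
            simp only [hRdef]; rw [if_neg hc1, if_pos hc2]
          rw [hRx]
          have hts : 0 ≤ t * Real.sqrt (p m) := mul_nonneg ht0.le (Real.sqrt_nonneg _)
          have heq : (t * Real.sqrt (p m) - r m) *
              (t ^ 2 * p m - r m * (t * Real.sqrt (p m)))
              = (t * Real.sqrt (p m)) * (t * Real.sqrt (p m) - r m) ^ 2 := by
            linear_combination (-(t ^ 2) * (t * Real.sqrt (p m) - r m)) * hps
          rw [heq]
          exact mul_nonneg hts (sq_nonneg _)
        · have hRx : R m = K := by simp only [hRdef]; rw [if_neg hc1, if_neg hc2]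
          rw [hRx]
          have hK' : t * Real.sqrt (p m₂) ≤ K := hlow₂.resolve_left (by omega)
          have hle : p m ≤ p m₂ := hmono m₂ m (by omega) (by omega) hmm.2
          have hKt : t * Real.sqrt (p m) ≤ K :=
            (mul_le_mul_of_nonneg_left (Real.sqrt_le_sqrt hle) ht0.le).trans hK'
          have hts : 0 ≤ t * Real.sqrt (p m) := mul_nonneg ht0.le (Real.sqrt_nonneg _)
          have h2 : (t * Real.sqrt (p m)) * (t * Real.sqrt (p m)) ≤ K * K :=
            mul_self_le_mul_self hts hKt
          have h3 : t ^ 2 * p m = (t * Real.sqrt (p m)) * (t * Real.sqrt (p m)) := by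
            linear_combination (-(t ^ 2)) * hps
          have h4' : K * K ≤ r m * K := mul_le_mul_of_nonneg_right hrm.1 hK.le
          have h5 : t ^ 2 * p m ≤ r m * K := by linarith
          have h6 : 0 ≤ (r m - K) * (r m * K - t ^ 2 * p m) :=
            mul_nonneg (sub_nonneg.mpr hrm.1) (sub_nonneg.mpr h5)
          nlinarith [h6]
    have hsum := Finset.sum_le_sum key
    rw [Finset.sum_add_distrib, Finset.sum_add_distrib, ← Finset.sum_div, ← Finset.sum_div,
      hRsum] at hsum
    have ht2 : (0:ℝ) < t ^ 2 := by positivity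
    have hdiv : (∑ m ∈ Finset.Icc 1 M, r m) / t ^ 2 ≤ S / t ^ 2 := by gcongr
    rw [hval] at hsum
    linarith
end
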